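/- arXiv:2302.12570 — 2 statements merged into one kernel-verified Lean document; each statement's English description precedes it below -/
import Mathlib

section
/- Let (X_t)_{t∈ℕ} be a random process over ℝ adapted to a filtration (F_t)_{t∈ℕ} with X₀ ≤ 0. Let b > 0 and let T = inf{t ∈ ℕ | X_t ≥ b}. Suppose there are constants a ≤ 0, c ∈ (0,b), and ε < 0 such that for all t ∈ ℕ: (i) E[(X_{t+1} − X_t)·1_{X_t ≥ a}·1_{T > t} | F_t] ≤ ε·1_{X_t ≥ a}·1_{T > t}; (ii) |X_{t+1} − X_t|·1_{X_t ≥ a}·1_{T > t} < c·1_{X_t ≥ a} + 1_{X_t < a}; and (iii) X_{t+1}·1_{X_t < a}·1_{T > t} ≤ 0. Then for all t ∈ ℕ, Pr[T ≤ t] ≤ t²·exp(−b·|ε|/(2c²)). -/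
open MeasureTheory
open scoped ENNReal

attribute [local instance] Classical.propDecidable

private lemma exp_quad_aux {x : ℝ} (hx : |x| ≤ 1) : Real.exp x ≤ 1 + x + x ^ 2 := by
  have h := Real.exp_bound hx (n := 2) (by norm_num)
  have hs : ∑ m ∈ Finset.range 2, x ^ m / (Nat.factorial m) = 1 + x := by
    simp [Finset.sum_range_succ, Nat.factorial]
  rw [hs] at h
  have h1 := (abs_sub_le_iff.1 h).1
  have h2 : |x| ^ 2 = x ^ 2 := sq_abs x
  have h3 : ((Nat.succ 2 : ℕ) : ℝ) / ((Nat.factorial 2 : ℕ) * (2:ℕ)) = 3/4 := by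
    norm_num [Nat.factorial]
  nlinarith [sq_nonneg x]

set_option maxHeartbeats 1000000 in
/-- negative-drift theorem (Theorem 2, Corollary 3.24 of Krejca): if the
process `(X_t)` adapted to `(F_t)` starts at `X₀ ≤ 0`, has drift at most `ε < 0` on
`{X_t ≥ a} ∩ {T > t}`, step size less than `c` there, and cannot jump above `0` from below
`a` before time `T`, then the hitting time `T` of `[b, ∞)` satisfies
`Pr[T ≤ t] ≤ t² exp(-b|ε|/(2c²))` for all `t`. -/
theorem negative_drift_theorem {Ω : Type*} [m0 : MeasurableSpace Ω]
    (μ : Measure Ω) [IsProbabilityMeasure μ]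
    (F : Filtration ℕ m0) (X : ℕ → Ω → ℝ) (hadapted : Adapted F X)
    (hX0 : ∀ᵐ ω ∂μ, X 0 ω ≤ 0)
    (b : ℝ) (hb : 0 < b)
    (T : Ω → ℕ∞)
    (hT : ∀ ω, T ω = sInf {t : ℕ∞ | ∃ t' : ℕ, t = (t' : ℕ∞) ∧ b ≤ X t' ω})
    (a : ℝ) (ha : a ≤ 0) (c : ℝ) (hc0 : 0 < c) (hcb : c < b)
    (ε : ℝ) (hε : ε < 0)
    (h1 : ∀ t : ℕ, ∀ᵐ ω ∂μ,
      (μ[fun ω' => (X (t + 1) ω' - X t ω') *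
          (if a ≤ X t ω' then 1 else 0) * (if (t : ℕ∞) < T ω' then 1 else 0) | F t]) ω ≤
        ε * (if a ≤ X t ω then 1 else 0) * (if (t : ℕ∞) < T ω then 1 else 0))
    (h2 : ∀ t : ℕ, ∀ᵐ ω ∂μ,
      |X (t + 1) ω - X t ω| *
          (if a ≤ X t ω then 1 else 0) * (if (t : ℕ∞) < T ω then 1 else 0) <
        c * (if a ≤ X t ω then 1 else 0) + (if X t ω < a then 1 else 0))
    (h3 : ∀ t : ℕ, ∀ᵐ ω ∂μ,
      X (t + 1) ω * (if X t ω < a then 1 else 0) * (if (t : ℕ∞) < T ω then 1 else 0) ≤ 0) :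
    ∀ t : ℕ, μ {ω | T ω ≤ (t : ℕ∞)} ≤
      ENNReal.ofReal ((t : ℝ) ^ 2 * Real.exp (-(b * |ε|) / (2 * c ^ 2))) := by
  classical
  intro t
  have hc2 : (0:ℝ) < c ^ 2 := by positivity
  have habs : |ε| = -ε := abs_of_neg hε
  have hXm : ∀ r : ℕ, Measurable (X r) := fun r =>
    Measurable.mono (hadapted r) (F.le r) le_rfl
  -- characterization of T
  have hTlt : ∀ (n : ℕ) (ω : Ω), ((n:ℕ∞) < T ω ↔ ∀ s ≤ n, X s ω < b) := by
    intro n ω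
    rw [hT ω]
    constructor
    · intro h s hs
      by_contra hbs
      push_neg at hbs
      have hle : sInf {u : ℕ∞ | ∃ t' : ℕ, u = (t' : ℕ∞) ∧ b ≤ X t' ω} ≤ (s : ℕ∞) :=
        sInf_le ⟨s, rfl, hbs⟩
      have hlt : (n : ℕ∞) < (s : ℕ∞) := lt_of_lt_of_le h hle
      have : n < s := by exact_mod_cast hlt
      omega
    · intro h
      have h1' : ((n+1 : ℕ) : ℕ∞) ≤ sInf {u : ℕ∞ | ∃ t' : ℕ, u = (t' : ℕ∞) ∧ b ≤ X t' ω} := by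
        apply le_sInf
        rintro x ⟨t', rfl, hbt⟩
        have hn : n + 1 ≤ t' := by
          by_contra hcon
          push_neg at hcon
          exact absurd (h t' (by omega)) (not_lt.2 hbt)
        exact_mod_cast hn
      calc (n:ℕ∞) < ((n+1:ℕ):ℕ∞) := by exact_mod_cast Nat.lt_succ_self n
        _ ≤ _ := h1'
  have hTle : ∀ (n : ℕ) (ω : Ω), (T ω ≤ (n:ℕ∞) ↔ ∃ s, s ≤ n ∧ b ≤ X s ω) := by
    intro n ω
    rw [← not_lt, hTlt n ω]
    push_neg
    rfl
  -- measurability of the events {n < T}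
  have hTmF : ∀ n : ℕ, MeasurableSet[F n] {ω | (n:ℕ∞) < T ω} := by
    intro n
    have hset : {ω | (n:ℕ∞) < T ω} = ⋂ s ∈ Finset.range (n+1), {ω | X s ω < b} := by
      ext ω
      simp only [Set.mem_setOf_eq, Set.mem_iInter, Finset.mem_range, Nat.lt_succ_iff]
      exact hTlt n ω
    rw [hset]
    refine Finset.measurableSet_biInter _ fun s hs => ?_
    have hsn : s ≤ n := by simpa [Nat.lt_succ_iff] using hs
    exact (F.mono hsn) _ (measurableSet_lt (hadapted s) measurable_const)
  -- the drift region
  set A : ℕ → Set Ω := fun r => {ω | a ≤ X r ω} ∩ {ω | (r:ℕ∞) < T ω} with hA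
  have hAF : ∀ r, MeasurableSet[F r] (A r) := fun r =>
    (measurableSet_le measurable_const (hadapted r)).inter (hTmF r)
  have hAm : ∀ r, MeasurableSet (A r) := fun r => F.le r _ (hAF r)
  have hAb : ∀ r ω, ω ∈ A r → X r ω < b := fun r ω h => (hTlt r ω).1 h.2 r le_rfl
  have hind : ∀ (r : ℕ) (ω : Ω),
      (if a ≤ X r ω then (1:ℝ) else 0) * (if (r:ℕ∞) < T ω then 1 else 0) =
        Set.indicator (A r) (fun _ => (1:ℝ)) ω := by
    intro r ω
    by_cases hc1 : a ≤ X r ω <;> by_cases hc2' : (r:ℕ∞) < T ω <;>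
      simp [hA, Set.indicator_apply, Set.mem_inter_iff, Set.mem_setOf_eq, hc1, hc2']
  -- the drift increment
  set f : ℕ → Ω → ℝ := fun r ω =>
    (X (r + 1) ω - X r ω) * Set.indicator (A r) (fun _ => (1:ℝ)) ω with hf
  have h1' : ∀ r : ℕ, ∀ᵐ ω ∂μ,
      (μ[f r | F r]) ω ≤ ε * Set.indicator (A r) (fun _ => (1:ℝ)) ω := by
    intro r
    have hfun : (fun ω' => (X (r + 1) ω' - X r ω') * (if a ≤ X r ω' then (1:ℝ) else 0) *
        (@ite ℝ ((r : ℕ∞) < T ω') (Classical.propDecidable _) 1 0)) = f r := by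
      funext ω'
      simp only [hf]
      by_cases hc1 : a ≤ X r ω' <;> by_cases hc2' : (r : ℕ∞) < T ω'
      · have hmem : ω' ∈ A r := ⟨hc1, hc2'⟩
        rw [if_pos hc1, if_pos hc2', Set.indicator_of_mem hmem]
        ring
      · have hmem : ω' ∉ A r := fun hmem => hc2' hmem.2
        rw [if_pos hc1, if_neg hc2', Set.indicator_of_notMem hmem]
        simp
      · have hmem : ω' ∉ A r := fun hmem => hc1 hmem.1
        rw [if_neg hc1, if_pos hc2', Set.indicator_of_notMem hmem]
        simp
      · have hmem : ω' ∉ A r := fun hmem => hc1 hmem.1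
        rw [if_neg hc1, if_neg hc2', Set.indicator_of_notMem hmem]
        simp
    filter_upwards [h1 r] with ω hω
    rw [hfun] at hω
    by_cases hc1 : a ≤ X r ω <;> by_cases hc2' : (r : ℕ∞) < T ω
    · have hmem : ω ∈ A r := ⟨hc1, hc2'⟩
      rw [if_pos hc1, if_pos hc2'] at hω
      rw [Set.indicator_of_mem hmem]
      simpa using hω
    · have hmem : ω ∉ A r := fun hmem => hc2' hmem.2
      rw [if_neg hc2'] at hω
      rw [Set.indicator_of_notMem hmem, mul_zero]
      simpa using hω
    · have hmem : ω ∉ A r := fun hmem => hc1 hmem.1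
      rw [if_neg hc1] at hω
      rw [Set.indicator_of_notMem hmem, mul_zero]
      simpa using hω
    · have hmem : ω ∉ A r := fun hmem => hc1 hmem.1
      rw [if_neg hc1] at hω
      rw [Set.indicator_of_notMem hmem, mul_zero]
      simpa using hω
  have h2' : ∀ r : ℕ, ∀ᵐ ω ∂μ, ω ∈ A r → |X (r+1) ω - X r ω| < c := by
    intro r
    filter_upwards [h2 r] with ω hω hmem
    have hmem1 : a ≤ X r ω := hmem.1
    have hmem2 : (r : ℕ∞) < T ω := hmem.2
    rw [if_pos hmem1, if_pos hmem2, if_neg (not_lt.2 hmem1)] at hω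
    simpa using hω
  have h3' : ∀ r : ℕ, ∀ᵐ ω ∂μ, X r ω < a → (r:ℕ∞) < T ω → X (r+1) ω ≤ 0 := by
    intro r
    filter_upwards [h3 r] with ω hω hxa hrT
    rw [if_pos hxa, if_pos hrT] at hω
    simpa using hω
  -- integrability helper
  have hInt : ∀ (g : Ω → ℝ) (C : ℝ), Measurable g → (∀ᵐ ω ∂μ, ‖g ω‖ ≤ C) →
      Integrable g μ := fun g C hg hbd =>
    Integrable.mono' (integrable_const C) hg.aestronglyMeasurable hbd
  have hfm : ∀ r, Measurable (f r) := fun r =>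
    ((hXm (r+1)).sub (hXm r)).mul (measurable_const.indicator (hAm r))
  have hfb : ∀ r, ∀ᵐ ω ∂μ, |f r ω| ≤ c := by
    intro r
    filter_upwards [h2' r] with ω hω
    by_cases hmem : ω ∈ A r
    · rw [hf]
      simp only [Set.indicator_of_mem hmem, mul_one]
      exact le_of_lt (hω hmem)
    · simp [hf, Set.indicator_of_notMem hmem, hc0.le]
  have hfi : ∀ r, Integrable (f r) μ := fun r =>
    hInt _ c (hfm r) (by simpa [Real.norm_eq_abs] using hfb r)
  by_cases hεc : ε < -c
  · -- degenerate case: the drift region is null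
    have hJ0 : ∀ r : ℕ, ∀ᵐ ω ∂μ, ω ∉ A r := by
      intro r
      set g : Ω → ℝ := fun ω => -c * Set.indicator (A r) (fun _ => (1:ℝ)) ω with hg
      have hgsm : StronglyMeasurable[F r] g :=
        (measurable_const.mul (measurable_const.indicator (hAF r))).stronglyMeasurable
      have hgi : Integrable g μ := hInt g c
        ((measurable_const.mul (measurable_const.indicator (hAm r))))
        (ae_of_all _ fun ω => by
          rw [hg, Real.norm_eq_abs]
          by_cases hmem : ω ∈ A r
          · simp [Set.indicator_of_mem hmem, abs_of_nonneg hc0.le, abs_neg]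
          · simp [Set.indicator_of_notMem hmem, hc0.le])
      have hgle : g ≤ᵐ[μ] f r := by
        filter_upwards [h2' r] with ω hω
        by_cases hmem : ω ∈ A r
        · rw [hg, hf]
          simp only [Set.indicator_of_mem hmem, mul_one]
          have := (abs_lt.1 (hω hmem)).1
          linarith
        · simp [hg, hf, Set.indicator_of_notMem hmem]
      have hmono := condExp_mono (m := F r) hgi (hfi r) hgle
      have heq : μ[g | F r] = g := condExp_of_stronglyMeasurable (F.le r) hgsm hgi
      filter_upwards [hmono, h1' r] with ω hω1 hω2 hmem
      rw [heq] at hω1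
      rw [hg] at hω1
      simp only [Set.indicator_of_mem hmem, mul_one] at hω1 hω2
      have : -c ≤ ε := le_trans hω1 hω2
      linarith
    have hae : ∀ᵐ ω ∂μ, ω ∉ {ω | T ω ≤ (t:ℕ∞)} := by
      have h3'' := ae_all_iff.2 h3'
      have hJ0' := ae_all_iff.2 hJ0
      filter_upwards [hX0, h3'', hJ0'] with ω hω0 hω3 hωJ hTt
      have hTt' : T ω ≤ (t : ℕ∞) := hTt
      obtain ⟨s₀, hs₀t, hbs₀⟩ := (hTle t ω).1 hTt'
      have hex : ∃ u, b ≤ X u ω := ⟨s₀, hbs₀⟩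
      have hub : b ≤ X (Nat.find hex) ω := Nat.find_spec hex
      set u := Nat.find hex with hu
      have hmin : ∀ r, r < u → ¬ b ≤ X r ω := fun r hr => Nat.find_min hex hr
      have hu0 : u ≠ 0 := by
        intro h
        rw [h] at hub
        linarith
      have hrT : ((u-1:ℕ):ℕ∞) < T ω :=
        (hTlt (u-1) ω).2 fun s' hs' => not_le.1 (hmin s' (by omega))
      have hra : X (u-1) ω < a := by
        by_contra hcon
        push_neg at hcon
        exact hωJ (u-1) ⟨hcon, hrT⟩
      have h4 := hω3 (u-1) hra hrT
      have hru : u - 1 + 1 = u := by omega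
      rw [hru] at h4
      linarith
    rw [measure_eq_zero_iff_ae_notMem.2 hae]
    exact zero_le
  · -- main case
    push_neg at hεc
    set l : ℝ := -ε / c ^ 2 with hl
    have hl0 : 0 < l := div_pos (by linarith) hc2
    have hlc2 : l * c ^ 2 = -ε := by
      rw [hl]
      field_simp
    have hlc : l * c ≤ 1 := by
      rw [hl, div_mul_eq_mul_div, div_le_one hc2]
      nlinarith
    -- the one-step supermartingale inequality
    have key : ∀ (r : ℕ) (G : Set Ω), MeasurableSet[F r] G →
        (∫ ω, Real.exp (l * X (r+1) ω) * ((A r ∩ G).indicator (fun _ => (1:ℝ)) ω) ∂μ) ≤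
          ∫ ω, Real.exp (l * X r ω) * ((A r ∩ G).indicator (fun _ => (1:ℝ)) ω) ∂μ := by
      intro r G hGF
      have hGm : MeasurableSet G := F.le r _ hGF
      set g : Ω → ℝ := fun ω =>
        Real.exp (l * X r ω) * ((A r ∩ G).indicator (fun _ => (1:ℝ)) ω) with hg
      have hgm0 : Measurable g :=
        ((measurable_const.mul (hXm r)).exp).mul
          (measurable_const.indicator ((hAm r).inter hGm))
      have hgF : StronglyMeasurable[F r] g :=
        (((measurable_const.mul (hadapted r)).exp).mul
          (measurable_const.indicator ((hAF r).inter hGF))).stronglyMeasurable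
      have hg0 : ∀ ω, 0 ≤ g ω := fun ω =>
        mul_nonneg (Real.exp_pos _).le
          (Set.indicator_nonneg (fun _ _ => zero_le_one) ω)
      have hgb : ∀ ω, g ω ≤ Real.exp (l * b) := by
        intro ω
        by_cases hmem : ω ∈ A r ∩ G
        · rw [hg]
          simp only [Set.indicator_of_mem hmem, mul_one]
          exact Real.exp_le_exp.2 (mul_le_mul_of_nonneg_left (le_of_lt (hAb r ω hmem.1)) hl0.le)
        · rw [hg]
          simp only [Set.indicator_of_notMem hmem, mul_zero]
          positivity
      have hgi : Integrable g μ := hInt g (Real.exp (l * b)) hgm0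
        (ae_of_all _ fun ω => by
          rw [Real.norm_eq_abs, abs_of_nonneg (hg0 ω)]; exact hgb ω)
      -- pointwise inequality
      have hpt : ∀ᵐ ω ∂μ, Real.exp (l * X (r+1) ω) * ((A r ∩ G).indicator (fun _ => (1:ℝ)) ω) ≤
          (1 + l^2 * c^2) * g ω + l * (g ω * f r ω) := by
        filter_upwards [h2' r] with ω hω
        by_cases hmem : ω ∈ A r ∩ G
        · have hd : |X (r+1) ω - X r ω| < c := hω hmem.1
          have hiA : Set.indicator (A r) (fun _ => (1:ℝ)) ω = 1 :=
            Set.indicator_of_mem hmem.1 _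
          have hi : Set.indicator (A r ∩ G) (fun _ => (1:ℝ)) ω = 1 :=
            Set.indicator_of_mem hmem _
          have hgval : g ω = Real.exp (l * X r ω) := by
            rw [hg]; simp only [hi, mul_one]
          have hfval : f r ω = X (r+1) ω - X r ω := by
            rw [hf]; simp only [hiA, mul_one]
          rw [hi, mul_one, hgval, hfval]
          have hsplit : l * X (r+1) ω = l * X r ω + l * (X (r+1) ω - X r ω) := by ring
          rw [hsplit, Real.exp_add]
          have hxle : |l * (X (r+1) ω - X r ω)| ≤ 1 := by
            rw [abs_mul, abs_of_pos hl0]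
            calc l * |X (r+1) ω - X r ω| ≤ l * c := by nlinarith
              _ ≤ 1 := hlc
          have hquad := exp_quad_aux hxle
          have he : (0:ℝ) < Real.exp (l * X r ω) := Real.exp_pos _
          have hsq : (l * (X (r+1) ω - X r ω))^2 ≤ l^2 * c^2 := by
            rw [mul_pow]
            have h6 : (X (r+1) ω - X r ω)^2 ≤ c^2 := by
              rw [← sq_abs]
              exact pow_le_pow_left₀ (abs_nonneg _) hd.le 2
            nlinarith [sq_nonneg l]
          nlinarith [he.le]
        · have hi : Set.indicator (A r ∩ G) (fun _ => (1:ℝ)) ω = 0 :=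
            Set.indicator_of_notMem hmem _
          have hgval : g ω = 0 := by rw [hg]; simp only [hi, mul_zero]
          rw [hi, hgval]
          simp
      -- integrability of both sides
      have hLm : Measurable (fun ω =>
          Real.exp (l * X (r+1) ω) * ((A r ∩ G).indicator (fun _ => (1:ℝ)) ω)) :=
        ((measurable_const.mul (hXm (r+1))).exp).mul
          (measurable_const.indicator ((hAm r).inter hGm))
      have hLi : Integrable (fun ω =>
          Real.exp (l * X (r+1) ω) * ((A r ∩ G).indicator (fun _ => (1:ℝ)) ω)) μ := by
        refine hInt _ (Real.exp (l * (b + c))) hLm ?_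
        filter_upwards [h2' r] with ω hω
        by_cases hmem : ω ∈ A r ∩ G
        · have hd := hω hmem.1
          have hx : X (r+1) ω ≤ b + c := by
            have h6 := (abs_lt.1 hd).2
            have h7 := hAb r ω hmem.1
            linarith
          rw [Set.indicator_of_mem hmem, mul_one, Real.norm_eq_abs,
            abs_of_nonneg (Real.exp_pos _).le]
          exact Real.exp_le_exp.2 (mul_le_mul_of_nonneg_left hx hl0.le)
        · rw [Set.indicator_of_notMem hmem, mul_zero]
          simp
          positivity
      have hgfi : Integrable (g * f r) μ := by
        refine hInt _ (Real.exp (l * b) * c) (hgm0.mul (hfm r)) ?_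
        filter_upwards [hfb r] with ω hω
        rw [Pi.mul_apply, Real.norm_eq_abs, abs_mul, abs_of_nonneg (hg0 ω)]
        exact mul_le_mul (hgb ω) hω (abs_nonneg _) (Real.exp_pos _).le
      have hgfi' : Integrable (fun ω => g ω * f r ω) μ := hgfi
      have hpull : μ[g * f r | F r] =ᵐ[μ] g * μ[f r | F r] :=
        condExp_mul_of_stronglyMeasurable_left hgF hgfi (hfi r)
      -- the key estimate for the cross term
      have h5 : ∫ ω, g ω * f r ω ∂μ ≤ ε * ∫ ω, g ω ∂μ := by
        have e1 : ∫ ω, g ω * f r ω ∂μ = ∫ ω, (μ[g * f r | F r]) ω ∂μ :=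
          (integral_condExp (F.le r)).symm
        rw [e1, integral_congr_ae hpull]
        have h6 : (fun ω => (g * μ[f r | F r]) ω) ≤ᵐ[μ] fun ω => ε * g ω := by
          filter_upwards [h1' r] with ω hω
          rw [Pi.mul_apply]
          by_cases hmem : ω ∈ A r ∩ G
          · have hiA : Set.indicator (A r) (fun _ => (1:ℝ)) ω = 1 :=
              Set.indicator_of_mem hmem.1 _
            rw [hiA, mul_one] at hω
            calc g ω * (μ[f r | F r]) ω ≤ g ω * ε :=
                  mul_le_mul_of_nonneg_left hω (hg0 ω)
              _ = ε * g ω := mul_comm _ _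
          · have hgval : g ω = 0 := by
              rw [hg]; simp only [Set.indicator_of_notMem hmem, mul_zero]
            rw [hgval]
            simp
        have h7 : Integrable (g * μ[f r | F r]) μ :=
          Integrable.congr integrable_condExp hpull
        have h8 := integral_mono_ae h7 (hgi.const_mul ε) h6
        rw [integral_const_mul] at h8
        exact h8
      calc (∫ ω, Real.exp (l * X (r+1) ω) * ((A r ∩ G).indicator (fun _ => (1:ℝ)) ω) ∂μ)
          ≤ ∫ ω, ((1 + l^2 * c^2) * g ω + l * (g ω * f r ω)) ∂μ := by
            refine integral_mono_ae hLi ?_ hpt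
            exact (hgi.const_mul _).add (hgfi'.const_mul l)
        _ = (1 + l^2 * c^2) * (∫ ω, g ω ∂μ) + l * ∫ ω, g ω * f r ω ∂μ := by
            rw [integral_add (hgi.const_mul _) (hgfi'.const_mul l),
              integral_const_mul, integral_const_mul]
        _ ≤ (1 + l^2 * c^2) * (∫ ω, g ω ∂μ) + l * (ε * ∫ ω, g ω ∂μ) := by
            have := mul_le_mul_of_nonneg_left h5 hl0.le
            linarith
        _ = ∫ ω, g ω ∂μ := by linear_combination (∫ ω, g ω ∂μ) * l * hlc2
    -- the excursion sets
    set Cs : ℕ → ℕ → Set Ω := fun s u =>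
      {ω | X s ω ≤ 0} ∩ ⋂ r ∈ Finset.Ico s u, A r with hCs
    have hCF : ∀ s u, s ≤ u → MeasurableSet[F u] (Cs s u) := by
      intro s u hsu
      refine MeasurableSet.inter ?_ ?_
      · exact (F.mono hsu) _ (measurableSet_le (hadapted s) measurable_const)
      · refine Finset.measurableSet_biInter _ fun r hr => ?_
        have : r < u := (Finset.mem_Ico.1 hr).2
        exact (F.mono this.le) _ (hAF r)
    have hCm : ∀ s u, s ≤ u → MeasurableSet (Cs s u) := fun s u hsu =>
      F.le u _ (hCF s u hsu)
    have hCsucc : ∀ s u, s ≤ u → Cs s (u+1) = (A u) ∩ (Cs s u) := by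
      intro s u hsu
      ext ω
      simp only [hCs, Set.mem_inter_iff, Set.mem_iInter, Finset.mem_Ico, Set.mem_setOf_eq]
      constructor
      · rintro ⟨hD, hI⟩
        exact ⟨hI u ⟨hsu, by omega⟩, hD, fun r hr => hI r ⟨hr.1, by omega⟩⟩
      · rintro ⟨hAu, hD, hI⟩
        refine ⟨hD, fun r hr => ?_⟩
        rcases Nat.lt_succ_iff_lt_or_eq.1 hr.2 with h | h
        · exact hI r ⟨hr.1, h⟩
        · subst h; exact hAu
    -- a.e. bound on the integrands along the chain
    have hCb : ∀ s u, s ≤ u → ∀ᵐ ω ∂μ,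
        Real.exp (l * X u ω) * ((Cs s u).indicator (fun _ => (1:ℝ)) ω) ≤
          Real.exp (l * (b + c)) := by
      intro s u hsu
      have hbc : 0 ≤ l * (b + c) := by positivity
      rcases Nat.eq_or_lt_of_le hsu with h | h
      · subst h
        refine ae_of_all _ fun ω => ?_
        by_cases hmem : ω ∈ Cs s s
        · rw [Set.indicator_of_mem hmem, mul_one]
          have hx : X s ω ≤ 0 := hmem.1
          calc Real.exp (l * X s ω) ≤ Real.exp 0 :=
              Real.exp_le_exp.2 (by nlinarith)
            _ ≤ Real.exp (l * (b + c)) := Real.exp_le_exp.2 hbc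
        · rw [Set.indicator_of_notMem hmem, mul_zero]
          positivity
      · have hu1 : u - 1 + 1 = u := by omega
        filter_upwards [h2' (u-1)] with ω hω
        by_cases hmem : ω ∈ Cs s u
        · have hAmem : ω ∈ A (u-1) := by
            have := hmem.2
            simp only [Set.mem_iInter, Finset.mem_Ico] at this
            exact this (u-1) ⟨by omega, by omega⟩
          have hd := hω hAmem
          rw [hu1] at hd
          have hxb := hAb (u-1) ω hAmem
          have hx : X u ω ≤ b + c := by
            have := (abs_lt.1 hd).2
            linarith
          rw [Set.indicator_of_mem hmem, mul_one]
          exact Real.exp_le_exp.2 (mul_le_mul_of_nonneg_left hx hl0.le)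
        · rw [Set.indicator_of_notMem hmem, mul_zero]
          positivity
    have hCi : ∀ s u, s ≤ u → Integrable (fun ω =>
        Real.exp (l * X u ω) * ((Cs s u).indicator (fun _ => (1:ℝ)) ω)) μ := by
      intro s u hsu
      refine hInt _ (Real.exp (l * (b + c)))
        (((measurable_const.mul (hXm u)).exp).mul
          (measurable_const.indicator (hCm s u hsu))) ?_
      filter_upwards [hCb s u hsu] with ω hω
      rw [Real.norm_eq_abs, abs_of_nonneg (mul_nonneg (Real.exp_pos _).le
        (Set.indicator_nonneg (fun _ _ => zero_le_one) ω))]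
      exact hω
    -- the supermartingale chain
    have chain : ∀ (s u : ℕ), s ≤ u →
        (∫ ω, Real.exp (l * X u ω) * ((Cs s u).indicator (fun _ => (1:ℝ)) ω) ∂μ) ≤ 1 := by
      intro s
      refine Nat.le_induction ?_ ?_
      · -- base case
        have hpt : ∀ ω, Real.exp (l * X s ω) * ((Cs s s).indicator (fun _ => (1:ℝ)) ω) ≤ 1 := by
          intro ω
          by_cases hmem : ω ∈ Cs s s
          · rw [Set.indicator_of_mem hmem, mul_one]
            rw [Real.exp_le_one_iff]
            have hx : X s ω ≤ 0 := hmem.1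
            nlinarith
          · rw [Set.indicator_of_notMem hmem, mul_zero]
            norm_num
        calc (∫ ω, Real.exp (l * X s ω) * ((Cs s s).indicator (fun _ => (1:ℝ)) ω) ∂μ)
            ≤ ∫ _, (1:ℝ) ∂μ := integral_mono (hCi s s le_rfl) (integrable_const 1) hpt
          _ = 1 := by simp
      · intro u hsu ih
        rw [hCsucc s u hsu]
        calc (∫ ω, Real.exp (l * X (u+1) ω) * ((A u ∩ Cs s u).indicator (fun _ => (1:ℝ)) ω) ∂μ)
            ≤ ∫ ω, Real.exp (l * X u ω) * ((A u ∩ Cs s u).indicator (fun _ => (1:ℝ)) ω) ∂μ :=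
              key u (Cs s u) (hCF s u hsu)
          _ ≤ ∫ ω, Real.exp (l * X u ω) * ((Cs s u).indicator (fun _ => (1:ℝ)) ω) ∂μ := by
              refine integral_mono ?_ (hCi s u hsu) fun ω => ?_
              · refine hInt _ (Real.exp (l * b))
                  (((measurable_const.mul (hXm u)).exp).mul
                    (measurable_const.indicator ((hAm u).inter (hCm s u hsu)))) ?_
                refine ae_of_all _ fun ω => ?_
                by_cases hmem : ω ∈ A u ∩ Cs s u
                · rw [Set.indicator_of_mem hmem, mul_one, Real.norm_eq_abs,
                    abs_of_nonneg (Real.exp_pos _).le]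
                  exact Real.exp_le_exp.2
                    (mul_le_mul_of_nonneg_left (hAb u ω hmem.1).le hl0.le)
                · rw [Set.indicator_of_notMem hmem, mul_zero]
                  simp
                  positivity
              · by_cases hmem : ω ∈ A u ∩ Cs s u
                · rw [Set.indicator_of_mem hmem, Set.indicator_of_mem hmem.2]
                · rw [Set.indicator_of_notMem hmem, mul_zero]
                  exact mul_nonneg (Real.exp_pos _).le
                    (Set.indicator_nonneg (fun _ _ => zero_le_one) ω)
          _ ≤ 1 := ih
    -- each excursion event has small probability
    have hEvent : ∀ s u : ℕ, s ≤ u →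
        μ (Cs s u ∩ {ω | b ≤ X u ω}) ≤ ENNReal.ofReal (Real.exp (-(l * b))) := by
      intro s u hsu
      set E := Cs s u ∩ {ω | b ≤ X u ω} with hE
      have hEm : MeasurableSet E :=
        (hCm s u hsu).inter (measurableSet_le measurable_const (hXm u))
      have h9 : ∀ ω, Real.exp (l * b) * (E.indicator (fun _ => (1:ℝ)) ω) ≤
          Real.exp (l * X u ω) * ((Cs s u).indicator (fun _ => (1:ℝ)) ω) := by
        intro ω
        by_cases hmem : ω ∈ E
        · rw [Set.indicator_of_mem hmem, Set.indicator_of_mem hmem.1, mul_one, mul_one]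
          exact Real.exp_le_exp.2 (mul_le_mul_of_nonneg_left hmem.2 hl0.le)
        · rw [Set.indicator_of_notMem hmem, mul_zero]
          exact mul_nonneg (Real.exp_pos _).le
            (Set.indicator_nonneg (fun _ _ => zero_le_one) ω)
      have hiE : Integrable (fun ω => Real.exp (l * b) * (E.indicator (fun _ => (1:ℝ)) ω)) μ := by
        refine hInt _ (Real.exp (l * b))
          (measurable_const.mul (measurable_const.indicator hEm)) ?_
        refine ae_of_all _ fun ω => ?_
        by_cases hmem : ω ∈ E
        · rw [Set.indicator_of_mem hmem, mul_one, Real.norm_eq_abs,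
            abs_of_nonneg (Real.exp_pos _).le]
        · rw [Set.indicator_of_notMem hmem, mul_zero]
          simp
          positivity
      have h10 : Real.exp (l * b) * (μ E).toReal ≤ 1 := by
        have h11 := integral_mono hiE (hCi s u hsu) h9
        rw [integral_const_mul] at h11
        have h12 : ∫ ω, E.indicator (fun _ => (1:ℝ)) ω ∂μ = (μ E).toReal := by
          rw [integral_indicator_const (1:ℝ) hEm]
          simp [measureReal_def]
        rw [h12] at h11
        exact le_trans h11 (chain s u hsu)
      have h13 : (μ E).toReal ≤ Real.exp (-(l * b)) := by
        have hpos := Real.exp_pos (l * b)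
        rw [Real.exp_neg]
        have hinv := mul_inv_cancel₀ (ne_of_gt hpos)
        nlinarith [ENNReal.toReal_nonneg (a := μ E)]
      calc μ E = ENNReal.ofReal (μ E).toReal :=
            (ENNReal.ofReal_toReal (measure_ne_top μ E)).symm
        _ ≤ ENNReal.ofReal (Real.exp (-(l * b))) := ENNReal.ofReal_le_ofReal h13
    -- the covering of {T ≤ t} by excursion events
    have hcover : ∀ᵐ ω ∂μ, ω ∈ {ω | T ω ≤ (t:ℕ∞)} →
        ω ∈ ⋃ u ∈ Finset.Icc 1 t, ⋃ s ∈ Finset.range u,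
          (Cs s u ∩ {ω' | b ≤ X u ω'}) := by
      have h3'' := ae_all_iff.2 h3'
      filter_upwards [hX0, h3''] with ω h0 h3ω hTt
      have hTt' : T ω ≤ (t : ℕ∞) := hTt
      obtain ⟨s₀, hs₀t, hbs₀⟩ := (hTle t ω).1 hTt'
      have hex : ∃ u, b ≤ X u ω := ⟨s₀, hbs₀⟩
      have hub : b ≤ X (Nat.find hex) ω := Nat.find_spec hex
      set u := Nat.find hex with hu
      have hut : u ≤ t := le_trans (Nat.find_min' hex hbs₀) hs₀t
      have humin : ∀ r, r < u → X r ω < b := fun r hr => not_le.1 (Nat.find_min hex hr)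
      have hu0 : 0 < u := by
        rcases Nat.eq_zero_or_pos u with h | h
        · exfalso
          rw [h] at hub
          linarith
        · exact h
      have hrT : ∀ r, r < u → (r:ℕ∞) < T ω := fun r hr =>
        (hTlt r ω).2 fun s' hs' => humin s' (lt_of_le_of_lt hs' hr)
      simp only [Set.mem_iUnion, Finset.mem_Icc, Finset.mem_range]
      by_cases hex2 : ∃ r, r < u ∧ X r ω < a
      · obtain ⟨r₀, hr₀u, hr₀a⟩ := hex2
        set s := Nat.findGreatest (fun r => X r ω < a) (u-1) with hs
        have hsspec : X s ω < a := by
          rw [hs]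
          exact Nat.findGreatest_spec (P := fun r' => X r' ω < a) (n := u - 1)
            (m := r₀) (by omega) hr₀a
        have hsle : s ≤ u - 1 := by
          rw [hs]
          exact Nat.findGreatest_le _
        have hsu : s < u := by omega
        have hs1 : X (s+1) ω ≤ 0 := h3ω s hsspec (hrT s hsu)
        have hs1u : s + 1 < u := by
          rcases Nat.lt_or_ge (s+1) u with h | h
          · exact h
          · exfalso
            have heq : s + 1 = u := by omega
            rw [heq] at hs1
            linarith
        refine ⟨u, ⟨hu0, hut⟩, s+1, hs1u, ⟨hs1, ?_⟩, hub⟩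
        simp only [Set.mem_iInter, Finset.mem_Ico]
        rintro r ⟨h1r, h2r⟩
        refine ⟨?_, hrT r h2r⟩
        have hnot : ¬ X r ω < a := by
          refine Nat.findGreatest_is_greatest (P := fun r' => X r' ω < a) (n := u - 1)
            ?_ (by omega)
          rw [← hs]
          omega
        exact not_lt.1 hnot
      · push_neg at hex2
        refine ⟨u, ⟨hu0, hut⟩, 0, hu0, ⟨h0, ?_⟩, hub⟩
        simp only [Set.mem_iInter, Finset.mem_Ico]
        rintro r ⟨_, hr⟩
        exact ⟨hex2 r hr, hrT r hr⟩
    -- put everything together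
    have hβ : ∀ u s : ℕ, s < u → μ (Cs s u ∩ {ω' | b ≤ X u ω'}) ≤
        ENNReal.ofReal (Real.exp (-(l * b))) := fun u s hsu => hEvent s u hsu.le
    calc μ {ω | T ω ≤ (t:ℕ∞)}
        ≤ μ (⋃ u ∈ Finset.Icc 1 t, ⋃ s ∈ Finset.range u, (Cs s u ∩ {ω' | b ≤ X u ω'})) := by
          refine measure_mono_ae ?_
          filter_upwards [hcover] with ω hω
          exact hω
      _ ≤ ∑ u ∈ Finset.Icc 1 t, μ (⋃ s ∈ Finset.range u, (Cs s u ∩ {ω' | b ≤ X u ω'})) :=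
          measure_biUnion_finset_le _ _
      _ ≤ ∑ u ∈ Finset.Icc 1 t, ∑ s ∈ Finset.range u, μ (Cs s u ∩ {ω' | b ≤ X u ω'}) :=
          Finset.sum_le_sum fun u _ => measure_biUnion_finset_le _ _
      _ ≤ ∑ u ∈ Finset.Icc 1 t, ∑ _s ∈ Finset.range u,
            ENNReal.ofReal (Real.exp (-(l * b))) := by
          refine Finset.sum_le_sum fun u _ => Finset.sum_le_sum fun s hs => ?_
          exact hβ u s (Finset.mem_range.1 hs)
      _ ≤ ∑ _u ∈ Finset.Icc 1 t, ∑ _s ∈ Finset.range t,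
            ENNReal.ofReal (Real.exp (-(l * b))) := by
          refine Finset.sum_le_sum fun u hu => ?_
          refine Finset.sum_le_sum_of_subset ?_
          exact Finset.range_subset_range.2 (Finset.mem_Icc.1 hu).2
      _ ≤ (t : ℝ≥0∞) * ((t : ℝ≥0∞) * ENNReal.ofReal (Real.exp (-(l * b)))) := by
          rw [Finset.sum_const, Finset.sum_const, Finset.card_range, nsmul_eq_mul, nsmul_eq_mul]
          refine mul_le_mul' ?_ le_rfl
          have hcard : (Finset.Icc 1 t).card ≤ t := by
            rw [Nat.card_Icc]
            omega
          exact_mod_cast hcard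
      _ ≤ ENNReal.ofReal ((t : ℝ) ^ 2 * Real.exp (-(b * |ε|) / (2 * c ^ 2))) := by
          rw [← ENNReal.ofReal_natCast t, ← ENNReal.ofReal_mul (by positivity),
            ← ENNReal.ofReal_mul (by positivity)]
          refine ENNReal.ofReal_le_ofReal ?_
          have hexp : Real.exp (-(l * b)) ≤ Real.exp (-(b * |ε|) / (2 * c ^ 2)) := by
            refine Real.exp_le_exp.2 ?_
            have h14 : -(b * |ε|) / (2 * c ^ 2) = -(l * b) / 2 := by
              rw [habs, hl]
              field_simp
            rw [h14]
            nlinarith [mul_nonneg hl0.le hb.le]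
          calc (t:ℝ) * ((t:ℝ) * Real.exp (-(l * b)))
              ≤ (t:ℝ) * ((t:ℝ) * Real.exp (-(b * |ε|) / (2 * c ^ 2))) := by
                refine mul_le_mul_of_nonneg_left ?_ (Nat.cast_nonneg t)
                exact mul_le_mul_of_nonneg_left hexp (Nat.cast_nonneg t)
            _ = (t:ℝ)^2 * Real.exp (-(b * |ε|) / (2 * c ^ 2)) := by ring
end

section
/- Let n ≥ 1, let k ∈ [1..n−1], let χ be a real number with 0 < χ < n, and let x, w ∈ {0,1}^n with |x|₁ = |w|₁ = n − k and Hamming distance of x and w equal to 2. Then the probability that uniform crossover of x and w, followed independently by standard bit mutation with rate χ/n, produces a string z with |z|₁ = n − k and z ≠ w is at least (1/4)·(1 − χ/n)^n·(1 + χ). -/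
open scoped ENNReal

namespace GA

attribute [local instance] Classical.propDecidable

/-- Bit strings of length `n`. -/
abbrev BitString (n : ℕ) := Fin n → Bool

/-- The number of ones in a bit string. -/
def oneCount {n : ℕ} (x : BitString n) : ℕ := (Finset.univ.filter fun i => x i = true).card

/-- The all-ones string, the unique global optimum of `jump`. -/
def allOnes (n : ℕ) : BitString n := fun _ => true

/-- The Hamming distance of two bit strings. -/
def hamming {n : ℕ} (x y : BitString n) : ℕ := (Finset.univ.filter fun i => x i ≠ y i).card

/-- The jump function with gap size `k`. -/
def jump (n k : ℕ) (x : BitString n) : ℕ :=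
  if oneCount x = n ∨ oneCount x ≤ n - k then k + oneCount x else n - oneCount x

/-- Interpret a real number as a probability in `ℝ≥0∞` (clamped to `[0,1]`). -/
noncomputable def toProb (p : ℝ) : ℝ≥0∞ := min (ENNReal.ofReal p) 1

lemma toProb_le_one (p : ℝ) : toProb p ≤ 1 := min_le_right _ _

/-- The product of independent distributions on the bits, as a distribution on bit strings. -/
noncomputable def pmfPi {n : ℕ} (p : Fin n → PMF Bool) : PMF (BitString n) :=
  PMF.ofFintype (fun z => ∏ i, p i (z i)) (by
    have h1 : ∀ i : Fin n, ∑ b : Bool, p i b = 1 := fun i => by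
      rw [← tsum_fintype (L := .unconditional _)]; exact (p i).tsum_coe
    calc ∑ z : BitString n, ∏ i, p i (z i)
        = ∑ z ∈ Fintype.piFinset (fun _ : Fin n => (Finset.univ : Finset Bool)),
            ∏ i, p i (z i) := by rw [Fintype.piFinset_univ]
      _ = ∏ i, ∑ b : Bool, p i b := (Finset.prod_univ_sum _ _).symm
      _ = 1 := Finset.prod_eq_one fun i _ => h1 i)

/-- The distribution of one bit after flipping `a` with probability `p`. -/
noncomputable def bitFlip (p : ℝ≥0∞) (hp : p ≤ 1) (a : Bool) : PMF Bool :=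
  PMF.ofFintype (fun b => if b = a then 1 - p else p) (by
    rw [Fintype.sum_bool]
    cases a
    · rw [if_neg (fun h => Bool.noConfusion h), if_pos rfl]
      exact add_tsub_cancel_of_le hp
    · rw [if_pos rfl, if_neg (fun h => Bool.noConfusion h)]
      exact tsub_add_cancel_of_le hp)

/-- Standard bit mutation with mutation rate `p`: every bit of `x` is flipped independently
with probability `p`. -/
noncomputable def mutate {n : ℕ} (p : ℝ≥0∞) (hp : p ≤ 1) (x : BitString n) : PMF (BitString n) :=
  pmfPi fun i => bitFlip p hp (x i)

/-- One bit of a uniform crossover. -/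
noncomputable def crossBit (a b : Bool) : PMF Bool :=
  if a = b then PMF.pure a else PMF.uniformOfFintype Bool

/-- Uniform crossover of `x` and `y`: every bit is chosen uniformly at random from the
corresponding bits of the two parents, independently across positions. -/
noncomputable def crossover {n : ℕ} (x y : BitString n) : PMF (BitString n) :=
  pmfPi fun i => crossBit (x i) (y i)

/-- Uniform crossover of `x` and `y` followed (independently) by standard bit mutation
with rate `p`. -/
noncomputable def crossMut {n : ℕ} (p : ℝ≥0∞) (hp : p ≤ 1) (x y : BitString n) :
    PMF (BitString n) :=
  (crossover x y).bind (mutate p hp)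

/-- The probability of an event under a discrete distribution. -/
noncomputable def prEvent {α : Type*} (p : PMF α) (E : α → Prop) : ℝ≥0∞ :=
  ∑' a, if E a then p a else 0

/-- Conditional probability `Pr[E | A]`. -/
noncomputable def condPr {α : Type*} (p : PMF α) (E A : α → Prop) : ℝ≥0∞ :=
  prEvent p (fun a => E a ∧ A a) / prEvent p A

/-- The minimal fitness value in a nonempty population. -/
noncomputable def minFit {n : ℕ} (f : BitString n → ℕ) (Q : Multiset (BitString n))
    (hQ : Q ≠ 0) : ℕ :=
  (Q.map f).toFinset.min' (by
    rw [Multiset.toFinset_nonempty]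
    simpa [Multiset.map_eq_zero] using hQ)

lemma filter_minFit_ne {n : ℕ} (f : BitString n → ℕ) (Q : Multiset (BitString n)) (hQ : Q ≠ 0) :
    Q.filter (fun a => f a = minFit f Q hQ) ≠ 0 := by
  have hmem : minFit f Q hQ ∈ (Q.map f).toFinset := Finset.min'_mem _ _
  rw [Multiset.mem_toFinset, Multiset.mem_map] at hmem
  obtain ⟨a, haQ, hfa⟩ := hmem
  intro h0
  have hin : a ∈ Q.filter (fun a => f a = minFit f Q hQ) :=
    Multiset.mem_filter.mpr ⟨haQ, hfa⟩
  rw [h0] at hin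
  exact absurd hin (Multiset.notMem_zero a)

/-- Remove an individual with lowest `f`-value from `Q`, breaking ties uniformly at random. -/
noncomputable def removeWorst {n : ℕ} (f : BitString n → ℕ) (Q : Multiset (BitString n))
    (hQ : Q ≠ 0) : PMF (Multiset (BitString n)) :=
  (PMF.ofMultiset (Q.filter (fun a => f a = minFit f Q hQ)) (filter_minFit_ne f Q hQ)).map
    (fun ℓ => Q.erase ℓ)

/-- The complete random outcome of one iteration of the `(μ+1)` GA: whether crossover was
used, the selected parent(s), the offspring, and the next population. -/
structure IterOutcome (n : ℕ) where
  cross : Bool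
  par1 : BitString n
  par2 : BitString n
  off : BitString n
  newPop : Multiset (BitString n)

/-- The Bernoulli distribution with an `ℝ≥0∞` parameter, as `PMF.bernoulli` was defined in
older Mathlib. -/
noncomputable def PMF.bernoulliENNReal (p : ℝ≥0∞) (h : p ≤ 1) : PMF Bool :=
  PMF.ofFintype (fun b => cond b p (1 - p)) (by simp [h])

/-- One iteration of the `(μ+1)` GA with crossover rate `pc` and mutation rate `pm`,
maximizing `f`, started from population `P`: with probability `pc` two parents are chosen
uniformly at random with replacement and an offspring is created by uniform crossover followed
by standard bit mutation; otherwise a uniformly random individual is mutated. Afterwards an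
individual of lowest fitness among `P` plus the offspring is removed, ties broken uniformly. -/
noncomputable def iterPMF (n : ℕ) (f : BitString n → ℕ) (pc pm : ℝ)
    (P : Multiset (BitString n)) : PMF (IterOutcome n) :=
  if hP : P ≠ 0 then
    ((PMF.bernoulliENNReal (toProb pc) (toProb_le_one pc)).bind fun doCross =>
      if doCross then
        (PMF.ofMultiset P hP).bind fun x =>
          (PMF.ofMultiset P hP).bind fun y =>
            (crossMut (toProb pm) (toProb_le_one pm) x y).map fun z =>
              ((true, x, y, z) : Bool × BitString n × BitString n × BitString n)
      else
        (PMF.ofMultiset P hP).bind fun x =>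
          (mutate (toProb pm) (toProb_le_one pm) x).map fun z => (false, x, x, z)).bind fun r =>
      (removeWorst f (r.2.2.2 ::ₘ P) (Multiset.cons_ne_zero)).map fun P' =>
        ⟨r.1, r.2.1, r.2.2.1, r.2.2.2, P'⟩
  else PMF.pure ⟨false, fun _ => false, fun _ => false, fun _ => false, P⟩

/-- A multiset of `m` independent samples from `p`. -/
noncomputable def iidMultiset {α : Type*} (p : PMF α) : ℕ → PMF (Multiset α)
  | 0 => PMF.pure 0
  | m + 1 => (iidMultiset p m).bind fun s => p.map fun a => a ::ₘ s

/-- The initial population of the `(μ+1)` GA: `μ` independent uniform samples. -/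
noncomputable def initPop (n μ : ℕ) : PMF (Multiset (BitString n)) :=
  iidMultiset (PMF.uniformOfFintype (BitString n)) μ

/-- State of the run of the GA on `jump n k`: current population together with a flag
recording whether the global optimum has been evaluated so far. -/
noncomputable def gaStepFlag (n k : ℕ) (pc pm : ℝ) :
    Multiset (BitString n) × Bool → PMF (Multiset (BitString n) × Bool) := fun s =>
  (iterPMF n (jump n k) pc pm s.1).map fun o => (o.newPop, s.2 || decide (o.off = allOnes n))

/-- One step of the GA on `jump n k`, tracking only the population. -/
noncomputable def gaStepPop (n k : ℕ) (pc pm : ℝ) :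
    Multiset (BitString n) → PMF (Multiset (BitString n)) := fun P =>
  (iterPMF n (jump n k) pc pm P).map fun o => o.newPop

/-- The initial state of the GA on `jump n k` (population plus flag whether the optimum
was evaluated during initialization). -/
noncomputable def initState (n μ : ℕ) : PMF (Multiset (BitString n) × Bool) :=
  (initPop n μ).map fun P => (P, decide (allOnes n ∈ P))

/-- `survive step G t s` is the probability that a Markov chain with transition kernel `step`
started in `s` does not visit the set `G` during the first `t` steps (including time 0),
i.e. `Pr[T > t]` for the hitting time `T` of `G`. -/
noncomputable def survive {S : Type*} (step : S → PMF S) (G : S → Prop) : ℕ → S → ℝ≥0∞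
  | 0, s => if G s then 0 else 1
  | t + 1, s => if G s then 0 else ∑' s', step s s' * survive step G t s'

/-- `Pr[T ≤ t]` for the hitting time `T` of `G` of the Markov chain `step` started in `s`. -/
noncomputable def prHitBy {S : Type*} (step : S → PMF S) (G : S → Prop) (t : ℕ) (s : S) :
    ℝ≥0∞ :=
  1 - survive step G t s

/-- The expected hitting time `E[T]`, `T = inf {t | X_t ∈ G}`, of a Markov chain with
transition kernel `step` and initial distribution `ρ`, computed as `∑_t Pr[T > t]`. -/
noncomputable def expectedHitting {S : Type*} (step : S → PMF S) (G : S → Prop) (ρ : PMF S) :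
    ℝ≥0∞ :=
  ∑' t : ℕ, ∑' s, ρ s * survive step G t s

/-- The expected runtime (number of fitness evaluations until the global optimum is evaluated
for the first time) of the `(μ+1)` GA on `jump n k`: the `μ` initial evaluations plus the
expected number of iterations until the optimum is evaluated. -/
noncomputable def expectedRuntime (n k μ : ℕ) (pc pm : ℝ) : ℝ≥0∞ :=
  μ + expectedHitting (gaStepFlag n k pc pm) (fun s => s.2 = true) (initState n μ)

/-- The expected number of iterations of the `(μ+1)` GA on `jump n k` until the optimum is
evaluated or the entire population is on the plateau. -/
noncomputable def expectedTimePlateau (n k μ : ℕ) (pc pm : ℝ) : ℝ≥0∞ :=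
  expectedHitting (gaStepFlag n k pc pm)
    (fun s => s.2 = true ∨ ∀ x ∈ s.1, oneCount x = n - k) (initState n μ)


-- ===== auxiliary lemmas =====

variable {n : ℕ}

lemma pmfPi_apply (p : Fin n → PMF Bool) (z : BitString n) :
    pmfPi p z = ∏ i, p i (z i) := by rw [pmfPi, PMF.ofFintype_apply]

lemma bitFlip_apply (p : ℝ≥0∞) (hp : p ≤ 1) (a b : Bool) :
    bitFlip p hp a b = if b = a then 1 - p else p := by rw [bitFlip, PMF.ofFintype_apply]

lemma mutate_self (p : ℝ≥0∞) (hp : p ≤ 1) (y : BitString n) :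
    mutate p hp y y = (1 - p) ^ n := by
  rw [mutate, pmfPi_apply]
  have : ∀ i : Fin n, bitFlip p hp (y i) (y i) = 1 - p := fun i => by
    rw [bitFlip_apply, if_pos rfl]
  simp only [this, Finset.prod_const, Finset.card_univ, Fintype.card_fin]

lemma mutate_update (p : ℝ≥0∞) (hp : p ≤ 1) (y : BitString n) (b : Fin n) :
    mutate p hp y (Function.update y b (!(y b))) = p * (1 - p) ^ (n - 1) := by
  rw [mutate, pmfPi_apply, ← Finset.mul_prod_erase Finset.univ _ (Finset.mem_univ b)]
  congr 1
  · rw [bitFlip_apply, Function.update_self, if_neg (by simp)]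
  · rw [Finset.prod_congr rfl (fun i hi => ?_), Finset.prod_const,
      Finset.card_erase_of_mem (Finset.mem_univ b), Finset.card_univ, Fintype.card_fin]
    have hib : i ≠ b := Finset.ne_of_mem_erase hi
    rw [Function.update_of_ne hib, bitFlip_apply, if_pos rfl]

lemma crossover_apply_agree (x w y : BitString n) (h : ∀ i, x i = w i → y i = x i) :
    crossover x w y = (2 : ℝ≥0∞)⁻¹ ^ hamming x w := by
  rw [crossover, pmfPi_apply,
    ← Finset.prod_filter_mul_prod_filter_not Finset.univ (fun i => x i ≠ w i)]
  have h1 : ∀ i ∈ Finset.univ.filter (fun i => x i ≠ w i),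
      crossBit (x i) (w i) (y i) = (2 : ℝ≥0∞)⁻¹ := by
    intro i hi
    have : x i ≠ w i := (Finset.mem_filter.mp hi).2
    rw [crossBit, if_neg this, PMF.uniformOfFintype_apply]
    simp
  have h2 : ∀ i ∈ Finset.univ.filter (fun i => ¬ x i ≠ w i),
      crossBit (x i) (w i) (y i) = 1 := by
    intro i hi
    have hxw : x i = w i := not_not.mp (Finset.mem_filter.mp hi).2
    rw [crossBit, if_pos hxw, h i hxw, PMF.pure_apply, if_pos rfl]
  rw [Finset.prod_congr rfl h1, Finset.prod_congr rfl h2, Finset.prod_const,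
    Finset.prod_const_one, mul_one, hamming]

lemma oneCount_update_true (x : BitString n) (b : Fin n) (hb : x b = false) :
    oneCount (Function.update x b true) = oneCount x + 1 := by
  rw [oneCount, oneCount]
  have hset : Finset.univ.filter (fun t => Function.update x b true t = true)
      = insert b (Finset.univ.filter fun t => x t = true) := by
    ext t
    rcases eq_or_ne t b with rfl | htb
    · simp
    · simp [Function.update_of_ne htb, htb]
  rw [hset, Finset.card_insert_of_notMem (by simp [hb])]

lemma oneCount_update_false (x : BitString n) (b : Fin n) (hb : x b = true) :
    oneCount (Function.update x b false) + 1 = oneCount x := by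
  rw [oneCount, oneCount]
  have hset : Finset.univ.filter (fun t => Function.update x b false t = true)
      = (Finset.univ.filter fun t => x t = true).erase b := by
    ext t
    rcases eq_or_ne t b with rfl | htb
    · simp
    · simp [Function.update_of_ne htb, htb]
  rw [hset, Finset.card_erase_add_one (by simp [hb])]

lemma oneCount_split (x w : BitString n) :
    oneCount x = (Finset.univ.filter fun t => x t = true ∧ x t = w t).card
      + (Finset.univ.filter fun t => x t = true ∧ x t ≠ w t).card := by
  rw [oneCount, ← Finset.filter_filter, ← Finset.filter_filter,
    Finset.card_filter_add_card_filter_not]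


lemma exists_diff_pair (x w : BitString n) (hxw : oneCount x = oneCount w)
    (hdist : hamming x w = 2) :
    ∃ i j : Fin n, i ≠ j ∧ x i = true ∧ x j = false ∧ w i = false ∧ w j = true ∧
      (Finset.univ.filter fun t => x t ≠ w t) = {i, j} := by
  obtain ⟨i, j, hij, hset⟩ := Finset.card_eq_two.mp hdist
  have hmem : ∀ t, x t ≠ w t ↔ t ∈ ({i, j} : Finset (Fin n)) := fun t => by
    rw [← hset]; simp
  have hxi : x i ≠ w i := (hmem i).mpr (by simp)
  have hxj : x j ≠ w j := (hmem j).mpr (by simp)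
  -- counting argument
  have hsplitx := oneCount_split x w
  have hsplitw := oneCount_split w x
  have hC : (Finset.univ.filter fun t => x t = true ∧ x t = w t).card
      = (Finset.univ.filter fun t => w t = true ∧ w t = x t).card := by
    congr 1; ext t
    simp only [Finset.mem_filter, Finset.mem_univ, true_and]
    constructor
    · rintro ⟨h1, h2⟩; exact ⟨h2 ▸ h1, h2.symm⟩
    · rintro ⟨h1, h2⟩; exact ⟨h2 ▸ h1, h2.symm⟩
  have hA : (Finset.univ.filter fun t => x t = true ∧ x t ≠ w t)
      = ({i, j} : Finset (Fin n)).filter fun t => x t = true := by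
    ext t
    simp only [Finset.mem_filter, Finset.mem_univ, true_and]
    rw [hmem t]; tauto
  have hB : (Finset.univ.filter fun t => w t = true ∧ w t ≠ x t)
      = ({i, j} : Finset (Fin n)).filter fun t => w t = true := by
    ext t
    simp only [Finset.mem_filter, Finset.mem_univ, true_and]
    rw [ne_comm, hmem t]; tauto
  rw [hA] at hsplitx
  rw [hB] at hsplitw
  have hAB : (({i, j} : Finset (Fin n)).filter fun t => x t = true).card
      = (({i, j} : Finset (Fin n)).filter fun t => w t = true).card := by omega
  cases hxi' : x i <;> cases hxj' : x j
  · -- x i = false, x j = false: w i = w j = true, contradiction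
    have hwi : w i = true := by revert hxi; cases h : w i <;> simp [hxi', h]
    have hwj : w j = true := by revert hxj; cases h : w j <;> simp [hxj', h]
    simp only [Finset.filter_insert, Finset.filter_singleton, hxi', hxj', hwi, hwj] at hAB
    simp [hij] at hAB
  · -- x i = false, x j = true
    have hwi : w i = true := by revert hxi; cases h : w i <;> simp [hxi', h]
    have hwj : w j = false := by revert hxj; cases h : w j <;> simp [hxj', h]
    exact ⟨j, i, hij.symm, hxj', hxi', hwj, hwi, by rw [hset, Finset.pair_comm]⟩
  · exact ⟨i, j, hij, hxi',  hxj',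
      by revert hxi; cases h : w i <;> simp [hxi', h],
      by revert hxj; cases h : w j <;> simp [hxj', h], hset⟩
  · have hwi : w i = false := by revert hxi; cases h : w i <;> simp [hxi', h]
    have hwj : w j = false := by revert hxj; cases h : w j <;> simp [hxj', h]
    have hempty : (({i, j} : Finset (Fin n)).filter fun t => w t = true) = ∅ :=
      Finset.filter_eq_empty_iff.mpr (by
        intro t ht
        rcases Finset.mem_insert.mp ht with rfl | ht
        · simp [hwi]
        · rw [Finset.mem_singleton] at ht; subst ht; simp [hwj])
    have hfull : (({i, j} : Finset (Fin n)).filter fun t => x t = true) = {i, j} :=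
      Finset.filter_eq_self.mpr (by
        intro t ht
        rcases Finset.mem_insert.mp ht with rfl | ht
        · exact hxi'
        · rw [Finset.mem_singleton] at ht; subst ht; exact hxj')
    rw [hfull, hempty, Finset.card_pair hij] at hAB
    simp at hAB

/-- The offspring obtained from `x` by moving the one at `b` (or the zero at `b`)
into the differing positions `i`/`j`. -/
def zAux {n : ℕ} (x : BitString n) (i j b : Fin n) : BitString n :=
  if x b = true then Function.update (Function.update x j true) b false
  else Function.update (Function.update x i false) b true

lemma zAux_true {x : BitString n} {i j b : Fin n} (h : x b = true) :
    zAux x i j b = Function.update (Function.update x j true) b false := by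
  unfold zAux; rw [if_pos h]

lemma zAux_false {x : BitString n} {i j b : Fin n} (h : x b = false) :
    zAux x i j b = Function.update (Function.update x i false) b true := by
  unfold zAux; rw [if_neg (by simp [h])]

lemma zAux_self (x : BitString n) (i j b : Fin n) : zAux x i j b b = !(x b) := by
  cases h : x b
  · rw [zAux_false h]; simp
  · rw [zAux_true h]; simp

lemma zAux_other (x : BitString n) (i j b t : Fin n) (hti : t ≠ i) (htj : t ≠ j)
    (htb : t ≠ b) : zAux x i j b t = x t := by
  cases h : x b
  · rw [zAux_false h, Function.update_of_ne htb, Function.update_of_ne hti]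
  · rw [zAux_true h, Function.update_of_ne htb, Function.update_of_ne htj]

lemma zAux_i {x : BitString n} {i j b : Fin n} (hbi : b ≠ i) (hij : i ≠ j)
    (hxi : x i = true) : zAux x i j b i = x b := by
  cases h : x b
  · rw [zAux_false h, Function.update_of_ne (Ne.symm hbi), Function.update_self]
  · rw [zAux_true h, Function.update_of_ne (Ne.symm hbi), Function.update_of_ne hij, hxi]

lemma zAux_j {x : BitString n} {i j b : Fin n} (hbj : b ≠ j) (hij : i ≠ j)
    (hxj : x j = false) : zAux x i j b j = x b := by
  cases h : x b
  · rw [zAux_false h, Function.update_of_ne (Ne.symm hbj), Function.update_of_ne (Ne.symm hij),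
      hxj]
  · rw [zAux_true h, Function.update_of_ne (Ne.symm hbj), Function.update_self]

/-- for `x, w` on the plateau (with `n - k` ones) at Hamming distance `2`,
uniform crossover of `x` and `w` followed by standard bit mutation with rate `χ/n` produces
a string `z` on the plateau with `z ≠ w` with probability at least
`(1/4)(1 - χ/n)^n (1 + χ)`. -/
theorem crossover_with_parent_produces_non_w
    (n k : ℕ) (hn : 1 ≤ n) (hk1 : 1 ≤ k) (hk2 : k + 1 ≤ n)
    (χ : ℝ) (hχ0 : 0 < χ) (hχn : χ < n)
    (x w : BitString n) (hx : oneCount x = n - k) (hw : oneCount w = n - k)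
    (hdist : hamming x w = 2) :
    ENNReal.ofReal (1 / 4 * (1 - χ / n) ^ n * (1 + χ)) ≤
      prEvent (crossMut (toProb (χ / n)) (toProb_le_one (χ / n)) x w)
        (fun z => oneCount z = n - k ∧ z ≠ w) := by
  obtain ⟨i, j, hij, hxi, hxj, hwi, hwj, hset⟩ :=
    exists_diff_pair x w (hx.trans hw.symm) hdist
  have hn2 : 2 ≤ n := by omega
  have hnk : 1 ≤ n - k := by omega
  set p := toProb (χ / n) with hp_def
  have hple : p ≤ 1 := toProb_le_one (χ / n)
  set u : BitString n := Function.update x j true with hu_def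
  set v : BitString n := Function.update x i false with hv_def
  -- crossover probabilities
  have hcross : ∀ y : BitString n, (∀ t, x t = w t → y t = x t) →
      crossover x w y = (2 : ℝ≥0∞)⁻¹ ^ 2 := fun y hy => by
    rw [crossover_apply_agree x w y hy, hdist]
  have hagree_x : ∀ t, x t = w t → x t = x t := fun _ _ => rfl
  have hagree_u : ∀ t, x t = w t → u t = x t := by
    intro t ht
    have htj : t ≠ j := by rintro rfl; rw [hxj, hwj] at ht; exact Bool.noConfusion ht
    rw [hu_def, Function.update_of_ne htj]
  have hagree_v : ∀ t, x t = w t → v t = x t := by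
    intro t ht
    have hti : t ≠ i := by rintro rfl; rw [hxi, hwi] at ht; exact Bool.noConfusion ht
    rw [hv_def, Function.update_of_ne hti]
  -- one counts
  have hcu : oneCount u = n - k + 1 := by rw [hu_def, oneCount_update_true x j hxj, hx]
  have hcv : oneCount v + 1 = n - k := by rw [hv_def, oneCount_update_false x i hxi, hx]
  -- distinctness of x, u, v
  have hxu : x ≠ u := fun h => by
    have hj := congrFun h j
    rw [hxj, hu_def, Function.update_self] at hj
    exact Bool.noConfusion hj
  have hxv : x ≠ v := fun h => by
    have hi := congrFun h i
    rw [hxi, hv_def, Function.update_self] at hi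
    exact Bool.noConfusion hi
  have huv : u ≠ v := fun h => by
    have hi := congrFun h i
    rw [hu_def, hv_def, Function.update_of_ne hij, Function.update_self, hxi] at hi
    exact Bool.noConfusion hi
  have hxw_ne : x ≠ w := fun h => by
    have hi := congrFun h i
    rw [hxi, hwi] at hi
    exact Bool.noConfusion hi
  -- mutation of u and v back to x
  have hux : Function.update u j (!(u j)) = x := by
    have huj : u j = true := by rw [hu_def]; exact Function.update_self _ _ _
    rw [huj, Bool.not_true, hu_def, Function.update_idem, ← hxj, Function.update_eq_self]
  have hvx : Function.update v i (!(v i)) = x := by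
    have hvi : v i = false := by rw [hv_def]; exact Function.update_self _ _ _
    rw [hvi, Bool.not_false, hv_def, Function.update_idem, ← hxi, Function.update_eq_self]
  -- facts about the z-family
  have hzcount : ∀ b : Fin n, b ≠ i → b ≠ j → oneCount (zAux x i j b) = n - k := by
    intro b hbi hbj
    cases hxb : x b
    · have hvb : v b = false := by rw [hv_def, Function.update_of_ne hbi]; exact hxb
      rw [zAux_false hxb, ← hv_def, oneCount_update_true v b hvb]
      omega
    · have hub : u b = true := by rw [hu_def, Function.update_of_ne hbj]; exact hxb
      rw [zAux_true hxb, ← hu_def]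
      have h2 := oneCount_update_false u b hub
      omega
  have hzneqw : ∀ b : Fin n, b ≠ i → b ≠ j → zAux x i j b ≠ w := by
    intro b hbi hbj h
    cases hxb : x b
    · have hj := congrFun h j
      rw [zAux_j hbj hij hxj, hxb, hwj] at hj
      exact Bool.noConfusion hj
    · have hi := congrFun h i
      rw [zAux_i hbi hij hxi, hxb, hwi] at hi
      exact Bool.noConfusion hi
  have hzneqx : ∀ b : Fin n, zAux x i j b ≠ x := by
    intro b h
    have hb := congrFun h b
    rw [zAux_self] at hb
    cases hxb : x b <;> rw [hxb] at hb <;> exact Bool.noConfusion hb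
  -- lower bound on crossMut of each z
  have hzges : ∀ b : Fin n, b ≠ i → b ≠ j →
      (2 : ℝ≥0∞)⁻¹ ^ 2 * (p * (1 - p) ^ (n - 1)) ≤ crossMut p hple x w (zAux x i j b) := by
    intro b hbi hbj
    rw [crossMut, PMF.bind_apply]
    cases hxb : x b
    · refine le_trans ?_ (ENNReal.le_tsum v)
      have hvb : v b = false := by rw [hv_def, Function.update_of_ne hbi]; exact hxb
      have hzv : zAux x i j b = Function.update v b (!(v b)) := by
        rw [hvb, Bool.not_false, zAux_false hxb, hv_def]
      rw [hzv, mutate_update, hcross v hagree_v]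
    · refine le_trans ?_ (ENNReal.le_tsum u)
      have hub : u b = true := by rw [hu_def, Function.update_of_ne hbj]; exact hxb
      have hzu : zAux x i j b = Function.update u b (!(u b)) := by
        rw [hub, Bool.not_true, zAux_true hxb, hu_def]
      rw [hzu, mutate_update, hcross u hagree_u]
  -- lower bound on crossMut of x
  have h1 : (2 : ℝ≥0∞)⁻¹ ^ 2 * (1 - p) ^ n + (2 : ℝ≥0∞)⁻¹ ^ 2 * (p * (1 - p) ^ (n - 1))
      + (2 : ℝ≥0∞)⁻¹ ^ 2 * (p * (1 - p) ^ (n - 1)) ≤ crossMut p hple x w x := by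
    have hsum3 : ∑ y ∈ ({x, u, v} : Finset (BitString n)),
        crossover x w y * mutate p hple y x ≤ crossMut p hple x w x := by
      rw [crossMut, PMF.bind_apply]
      exact ENNReal.sum_le_tsum _
    rw [Finset.sum_insert (by simp [hxu, hxv]), Finset.sum_insert (by simp [huv]),
      Finset.sum_singleton] at hsum3
    have hmu : mutate p hple u x = p * (1 - p) ^ (n - 1) := by
      rw [← hux]; exact mutate_update p hple u j
    have hmv : mutate p hple v x = p * (1 - p) ^ (n - 1) := by
      rw [← hvx]; exact mutate_update p hple v i
    rw [hcross x hagree_x, hcross u hagree_u, hcross v hagree_v, mutate_self, hmu, hmv]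
      at hsum3
    rw [← add_assoc] at hsum3
    exact hsum3
  -- the index set and the family of good offspring
  set T : Finset (Fin n) := Finset.univ \ {i, j} with hT
  have hcardT : T.card = n - 2 := by
    rw [hT, Finset.card_sdiff_of_subset (Finset.subset_univ _), Finset.card_univ, Fintype.card_fin,
      Finset.card_pair hij]
  have hmemT : ∀ b ∈ T, b ≠ i ∧ b ≠ j := by
    intro b hb
    rw [hT, Finset.mem_sdiff] at hb
    simpa using hb.2
  set Z : Finset (BitString n) := insert x (T.image (zAux x i j)) with hZ
  have hE : ∀ z ∈ Z, oneCount z = n - k ∧ z ≠ w := by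
    intro z hz
    rw [hZ, Finset.mem_insert] at hz
    rcases hz with rfl | hz
    · exact ⟨hx, hxw_ne⟩
    · obtain ⟨b, hb, rfl⟩ := Finset.mem_image.mp hz
      obtain ⟨hbi, hbj⟩ := hmemT b hb
      exact ⟨hzcount b hbi hbj, hzneqw b hbi hbj⟩
  have h_pr : ∑ z ∈ Z, crossMut p hple x w z ≤
      prEvent (crossMut p (toProb_le_one (χ / n)) x w)
        (fun z => oneCount z = n - k ∧ z ≠ w) := by
    rw [prEvent]
    refine le_trans (le_of_eq (Finset.sum_congr rfl fun z hz => ?_)) (ENNReal.sum_le_tsum Z)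
    rw [if_pos (hE z hz)]
  have hsplitZ : ∑ z ∈ Z, crossMut p hple x w z
      = crossMut p hple x w x + ∑ b ∈ T, crossMut p hple x w (zAux x i j b) := by
    rw [hZ, Finset.sum_insert (by
        simp only [Finset.mem_image]
        rintro ⟨b, _, hbx⟩
        exact hzneqx b hbx),
      Finset.sum_image (by
        intro b hb b' hb' heq
        by_contra hne
        have hb2 := hmemT b hb
        have := congrFun heq b
        rw [zAux_self, zAux_other x i j b' b hb2.1 hb2.2 hne] at this
        cases hxb : x b <;> rw [hxb] at this <;> exact Bool.noConfusion this)]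
  rw [hsplitZ] at h_pr
  have h2 : ((n - 2 : ℕ) : ℝ≥0∞) * ((2 : ℝ≥0∞)⁻¹ ^ 2 * (p * (1 - p) ^ (n - 1)))
      ≤ ∑ b ∈ T, crossMut p hple x w (zAux x i j b) := by
    calc ((n - 2 : ℕ) : ℝ≥0∞) * ((2 : ℝ≥0∞)⁻¹ ^ 2 * (p * (1 - p) ^ (n - 1)))
        = ∑ _b ∈ T, (2 : ℝ≥0∞)⁻¹ ^ 2 * (p * (1 - p) ^ (n - 1)) := by
          rw [Finset.sum_const, hcardT, nsmul_eq_mul]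
      _ ≤ ∑ b ∈ T, crossMut p hple x w (zAux x i j b) :=
          Finset.sum_le_sum fun b hb => hzges b (hmemT b hb).1 (hmemT b hb).2
  -- real-number facts
  set q : ℝ := χ / n with hqdef
  have hn0 : (0 : ℝ) < n := by positivity
  have hq0 : 0 ≤ q := by positivity
  have hq1 : q ≤ 1 := by rw [hqdef, div_le_one hn0]; exact le_of_lt hχn
  have h1q0 : 0 ≤ 1 - q := by linarith
  have hpq : p = ENNReal.ofReal q := by
    rw [hp_def, toProb, min_eq_left (ENNReal.ofReal_le_one.mpr hq1)]
  have h1p : (1 : ℝ≥0∞) - p = ENNReal.ofReal (1 - q) := by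
    rw [hpq, ENNReal.ofReal_sub 1 hq0, ENNReal.ofReal_one]
  have hc0 : ((2 : ℝ≥0∞)⁻¹) ^ 2 = ENNReal.ofReal (1 / 4) := by
    rw [one_div, ENNReal.ofReal_inv_of_pos (by norm_num), ← ENNReal.inv_pow]
    norm_num
  have hterm1 : ENNReal.ofReal (1 / 4 * (1 - q) ^ n) = (2 : ℝ≥0∞)⁻¹ ^ 2 * (1 - p) ^ n := by
    rw [ENNReal.ofReal_mul (by norm_num), hc0, ENNReal.ofReal_pow h1q0, h1p]
  have hterm2 : ENNReal.ofReal (1 / 4 * (q * (1 - q) ^ (n - 1)))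
      = (2 : ℝ≥0∞)⁻¹ ^ 2 * (p * (1 - p) ^ (n - 1)) := by
    rw [ENNReal.ofReal_mul (by norm_num), ENNReal.ofReal_mul hq0,
      ENNReal.ofReal_pow h1q0, h1p, hpq, hc0]
  have hterm3 : ENNReal.ofReal (((n - 2 : ℕ) : ℝ) * (1 / 4 * (q * (1 - q) ^ (n - 1))))
      = ((n - 2 : ℕ) : ℝ≥0∞) * ((2 : ℝ≥0∞)⁻¹ ^ 2 * (p * (1 - p) ^ (n - 1))) := by
    rw [ENNReal.ofReal_mul (Nat.cast_nonneg _), hterm2, ENNReal.ofReal_natCast]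
  -- the real inequality
  have hreal : 1 / 4 * (1 - q) ^ n * (1 + χ)
      ≤ 1 / 4 * (1 - q) ^ n + 1 / 4 * (q * (1 - q) ^ (n - 1))
        + 1 / 4 * (q * (1 - q) ^ (n - 1))
        + ((n - 2 : ℕ) : ℝ) * (1 / 4 * (q * (1 - q) ^ (n - 1))) := by
    have hcast : ((n - 2 : ℕ) : ℝ) = (n : ℝ) - 2 := by
      rw [Nat.cast_sub hn2]; norm_num
    have hAB : (1 - q) ^ n ≤ (1 - q) ^ (n - 1) :=
      pow_le_pow_of_le_one h1q0 (by linarith) (Nat.sub_le n 1)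
    have hnq : (n : ℝ) * q = χ := by
      rw [hqdef, mul_div_cancel₀ χ (ne_of_gt hn0)]
    have hhint : χ * (1 - q) ^ n ≤ χ * (1 - q) ^ (n - 1) :=
      mul_le_mul_of_nonneg_left hAB (le_of_lt hχ0)
    have hr4 : ((n : ℝ) - 2) * (1 / 4 * (q * (1 - q) ^ (n - 1)))
        = χ * (1 - q) ^ (n - 1) / 4 - 2 * (1 / 4 * (q * (1 - q) ^ (n - 1))) := by
      rw [sub_mul]
      rw [show (n : ℝ) * (1 / 4 * (q * (1 - q) ^ (n - 1)))
        = ((n : ℝ) * q) * (1 - q) ^ (n - 1) / 4 by ring, hnq]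
    rw [hcast, hr4]
    nlinarith [hhint]
  -- put everything together
  refine le_trans (ENNReal.ofReal_le_ofReal hreal) (le_trans ?_ h_pr)
  calc ENNReal.ofReal (1 / 4 * (1 - q) ^ n + 1 / 4 * (q * (1 - q) ^ (n - 1))
        + 1 / 4 * (q * (1 - q) ^ (n - 1))
        + ((n - 2 : ℕ) : ℝ) * (1 / 4 * (q * (1 - q) ^ (n - 1))))
      ≤ ENNReal.ofReal (1 / 4 * (1 - q) ^ n + 1 / 4 * (q * (1 - q) ^ (n - 1))
          + 1 / 4 * (q * (1 - q) ^ (n - 1)))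
        + ENNReal.ofReal (((n - 2 : ℕ) : ℝ) * (1 / 4 * (q * (1 - q) ^ (n - 1)))) :=
        ENNReal.ofReal_add_le
    _ ≤ (ENNReal.ofReal (1 / 4 * (1 - q) ^ n + 1 / 4 * (q * (1 - q) ^ (n - 1)))
          + ENNReal.ofReal (1 / 4 * (q * (1 - q) ^ (n - 1))))
        + ENNReal.ofReal (((n - 2 : ℕ) : ℝ) * (1 / 4 * (q * (1 - q) ^ (n - 1)))) :=
        add_le_add_left ENNReal.ofReal_add_le _
    _ ≤ ((ENNReal.ofReal (1 / 4 * (1 - q) ^ n)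
          + ENNReal.ofReal (1 / 4 * (q * (1 - q) ^ (n - 1))))
          + ENNReal.ofReal (1 / 4 * (q * (1 - q) ^ (n - 1))))
        + ENNReal.ofReal (((n - 2 : ℕ) : ℝ) * (1 / 4 * (q * (1 - q) ^ (n - 1)))) :=
        add_le_add (add_le_add ENNReal.ofReal_add_le le_rfl) le_rfl
    _ = ((2 : ℝ≥0∞)⁻¹ ^ 2 * (1 - p) ^ n + (2 : ℝ≥0∞)⁻¹ ^ 2 * (p * (1 - p) ^ (n - 1))
          + (2 : ℝ≥0∞)⁻¹ ^ 2 * (p * (1 - p) ^ (n - 1)))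
        + ((n - 2 : ℕ) : ℝ≥0∞) * ((2 : ℝ≥0∞)⁻¹ ^ 2 * (p * (1 - p) ^ (n - 1))) := by
        rw [hterm1, hterm2, hterm3]
    _ ≤ crossMut p hple x w x + ∑ b ∈ T, crossMut p hple x w (zAux x i j b) :=
        add_le_add h1 h2

end GA
end
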